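/- For every p > 0, G(1/(3p), p, p) > 2π/3 − 8p/3. (The two sides have the same limit 2π/3 as p → 0⁺; the right-hand side is the limit of G(t, p, p) as t → +∞.) -/

import Mathlib

open Real

/-- `S₀(t) = 8t³/(1+t²)³`, the spherical candle function in the variable `t = tan(ℓ/2)`. -/
noncomputable def sphS0 (t : ℝ) : ℝ := 8 * t ^ 3 / (1 + t ^ 2) ^ 3

/-- `S₋₁(t) = 4t⁴(3+t²)/(3(1+t²)³)`. -/
noncomputable def sphSm1 (t : ℝ) : ℝ := 4 * t ^ 4 * (3 + t ^ 2) / (3 * (1 + t ^ 2) ^ 3)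

/-- `S₋₂(t) = (4/3)·arctan t − (4/3)·t/(1+t²) − (8/9)·t³/(1+t²)³`. -/
noncomputable def sphSm2 (t : ℝ) : ℝ :=
  (4 / 3) * arctan t - (4 / 3) * t / (1 + t ^ 2) - (8 / 9) * t ^ 3 / (1 + t ^ 2) ^ 3

/-- `G(t, p, q) = (8/3)·arctan t − pq·S₀(t) − (p+q)·S₋₁(t) − S₋₂(t)`. -/
noncomputable def sphGt (t p q : ℝ) : ℝ :=
  (8 / 3) * arctan t - p * q * sphS0 t - (p + q) * sphSm1 t - sphSm2 t


private lemma sph_arctan_lt (x : ℝ) (hx : 0 < x) :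
    arctan x < 2 * x / 3 + x / (3 * (1 + x ^ 2)) := by
  set f : ℝ → ℝ := fun t => 2 * t / 3 + t / (3 * (1 + t ^ 2)) - arctan t with hf
  have hderiv : ∀ y : ℝ, HasDerivAt f (2 * y ^ 4 / (3 * (1 + y ^ 2) ^ 2)) y := by
    intro y
    have hd0 : (0:ℝ) < 3 * (1 + y ^ 2) := by positivity
    have hden : HasDerivAt (fun t : ℝ => 3 * (1 + t ^ 2)) (6 * y) y := by
      have h := ((hasDerivAt_pow 2 y).const_add (1:ℝ)).const_mul (3:ℝ)
      exact h.congr_deriv (by norm_num; ring)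
    have hq : HasDerivAt (fun t : ℝ => t / (3 * (1 + t ^ 2)))
        ((1 * (3 * (1 + y ^ 2)) - y * (6 * y)) / (3 * (1 + y ^ 2)) ^ 2) y :=
      (hasDerivAt_id y).div hden hd0.ne'
    have hlin : HasDerivAt (fun t : ℝ => 2 * t / 3) (2 / 3) y := by
      have h := ((hasDerivAt_id y).const_mul (2:ℝ)).div_const (3:ℝ)
      exact h.congr_deriv (by norm_num)
    have h := (hlin.add hq).sub (hasDerivAt_arctan y)
    refine h.congr_deriv ?_
    have h1 : (1 + y ^ 2) ≠ 0 := by positivity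
    field_simp
    ring
  have hmono : StrictMonoOn f (Set.Ici (0:ℝ)) := by
    apply strictMonoOn_of_deriv_pos (convex_Ici 0)
    · exact fun y _ => (hderiv y).continuousAt.continuousWithinAt
    · intro y hy
      rw [interior_Ici] at hy
      rw [(hderiv y).deriv]
      have hy' : (0:ℝ) < y := hy
      positivity
  have h0 : f 0 = 0 := by simp [hf]
  have := hmono (Set.self_mem_Ici) (Set.mem_Ici.mpr hx.le) hx
  rw [h0] at this
  simp only [hf] at this
  linarith

/-- `G(1/(3p), p, p) > 2π/3 − 8p/3` for all `p > 0`. -/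
theorem sphGt_diag_gt (p : ℝ) (hp : 0 < p) :
    2 * π / 3 - 8 * p / 3 < sphGt (1 / (3 * p)) p p := by
  have h3p : (0:ℝ) < 3 * p := by positivity
  have harc : arctan (1 / (3 * p)) = π / 2 - arctan (3 * p) := by
    rw [one_div]; exact arctan_inv_of_pos h3p
  have hkey := sph_arctan_lt (3 * p) h3p
  have hD : (0:ℝ) < 1 + (3 * p) ^ 2 := by positivity
  have hident : sphGt (1 / (3 * p)) p p
      = 2 * π / 3 - (4 / 3) * arctan (3 * p) + (4 * p / 3) / (1 + 9 * p ^ 2) := by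
    unfold sphGt sphS0 sphSm1 sphSm2
    rw [harc]
    have hp' : p ≠ 0 := hp.ne'
    have h1 : (1 + (1 / (3 * p)) ^ 2) ≠ 0 := by positivity
    have h2 : (1 + 9 * p ^ 2) ≠ 0 := by positivity
    field_simp
    ring
  rw [hident]
  have h9 : (0:ℝ) < 1 + 9 * p ^ 2 := by positivity
  have : arctan (3 * p) < 2 * p + p / (1 + 9 * p ^ 2) := by
    have : 2 * (3 * p) / 3 + (3 * p) / (3 * (1 + (3 * p) ^ 2)) = 2 * p + p / (1 + 9 * p ^ 2) := by
      rw [show (1 + (3 * p) ^ 2 : ℝ) = 1 + 9 * p ^ 2 by ring]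
      field_simp
    linarith [hkey, this.symm.le, this.le]
  have hh : (4:ℝ) / 3 * arctan (3 * p) < 8 * p / 3 + (4 * p / 3) / (1 + 9 * p ^ 2) := by
    have h4 : (4 * p / 3) / (1 + 9 * p ^ 2) = (4/3) * (p / (1 + 9 * p ^ 2)) := by ring
    nlinarith [this]
  linarith
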